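/- Let n ≥ 2 and let 1 ≤ p ≤ n−1 be an integer. Then G_p is uniformly elliptic: for every n×n real symmetric matrix W and every positive semidefinite real symmetric matrix N, min(p, n−p)·‖N‖ ≤ G_p(W + N) − G_p(W) ≤ max(p, n−p)·tr(N), where ‖N‖ denotes the operator norm of N (its largest eigenvalue). -/

import Mathlib

open Matrix Metric Real

noncomputable section

attribute [local instance] Matrix.normedAddCommGroup Matrix.normedSpace

/-- The `i`-th partial derivative of `u` at `x`. -/
def pd {n : ℕ} (u : EuclideanSpace ℝ (Fin n) → ℝ) (x : EuclideanSpace ℝ (Fin n)) (i : Fin n) : ℝ :=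
  fderiv ℝ u x (EuclideanSpace.single i 1)

/-- The Hessian matrix `∇²u(x)`. -/
def hessian {n : ℕ} (u : EuclideanSpace ℝ (Fin n) → ℝ) (x : EuclideanSpace ℝ (Fin n)) :
    Matrix (Fin n) (Fin n) ℝ :=
  Matrix.of fun i j => pd (fun y => pd u y j) x i

/-- The conformal Schouten matrix `A^u(x) = ∇²u + ∇u ⊗ ∇u − (|∇u|²/2)·Iₙ`. -/
def schouten {n : ℕ} (u : EuclideanSpace ℝ (Fin n) → ℝ) (x : EuclideanSpace ℝ (Fin n)) :
    Matrix (Fin n) (Fin n) ℝ :=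
  hessian u x + Matrix.of (fun i j => pd u x i * pd u x j)
    - ((∑ i, (pd u x i) ^ 2) / 2) • (1 : Matrix (Fin n) (Fin n) ℝ)

/-- Eigenvalues of a symmetric matrix, sorted in nondecreasing order. -/
def sortedEig {n : ℕ} (A : Matrix (Fin n) (Fin n) ℝ) (hA : A.IsHermitian) : Fin n → ℝ :=
  hA.eigenvalues ∘ Tuple.sort hA.eigenvalues

/-- `G_p(A) = (n−p)·(λ₁+⋯+λ_p) + p·(λ_{p+1}+⋯+λₙ)` (junk value `0` on non-symmetric input). -/
def Gp {n : ℕ} (p : ℕ) (A : Matrix (Fin n) (Fin n) ℝ) : ℝ :=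
  if hA : A.IsHermitian then
    ∑ i : Fin n, (if (i : ℕ) < p then ((n : ℝ) - p) else (p : ℝ)) * sortedEig A hA i
  else 0

/-- Operator norm of a matrix, acting on Euclidean space. -/
def opNorm {n : ℕ} (A : Matrix (Fin n) (Fin n) ℝ) : ℝ :=
  ‖LinearMap.toContinuousLinearMap (Matrix.toEuclideanLin A)‖

/-- `F` is uniformly elliptic with ellipticity constants `0 < l ≤ L`. -/
def UniformlyElliptic {n : ℕ} (F : Matrix (Fin n) (Fin n) ℝ → ℝ) (l L : ℝ) : Prop :=
  0 < l ∧ l ≤ L ∧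
    ∀ W N : Matrix (Fin n) (Fin n) ℝ, W.IsHermitian → N.PosSemidef →
      l * opNorm N ≤ F (W + N) - F W ∧ F (W + N) - F W ≤ L * opNorm N

/-- `F` is concave on the space of symmetric matrices. -/
def ConcaveOnSym {n : ℕ} (F : Matrix (Fin n) (Fin n) ℝ → ℝ) : Prop :=
  ∀ A B : Matrix (Fin n) (Fin n) ℝ, A.IsHermitian → B.IsHermitian →
    ∀ t : ℝ, 0 ≤ t → t ≤ 1 → t * F A + (1 - t) * F B ≤ F (t • A + (1 - t) • B)


namespace GpAux

variable {n : ℕ}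

/-- quadratic form of a matrix on Euclidean space -/
def q (A : Matrix (Fin n) (Fin n) ℝ) (x : EuclideanSpace ℝ (Fin n)) : ℝ :=
  inner ℝ x (Matrix.toEuclideanLin A x)

lemma q_add (A B : Matrix (Fin n) (Fin n) ℝ) (x : EuclideanSpace ℝ (Fin n)) :
    q (A + B) x = q A x + q B x := by
  simp [q, inner_add_right]

lemma exists_sorted_basis (A : Matrix (Fin n) (Fin n) ℝ) (hA : A.IsHermitian) :
    ∃ b : OrthonormalBasis (Fin n) ℝ (EuclideanSpace ℝ (Fin n)),
      ∀ j, Matrix.toEuclideanLin A (b j) = sortedEig A hA j • b j := by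
  refine ⟨hA.eigenvectorBasis.reindex (Tuple.sort hA.eigenvalues).symm, fun j => ?_⟩
  simp only [OrthonormalBasis.reindex_apply, Equiv.symm_symm]
  have h := hA.mulVec_eigenvectorBasis (Tuple.sort hA.eigenvalues j)
  apply (WithLp.equiv 2 (Fin n → ℝ)).injective
  simp only [WithLp.equiv_apply, Matrix.ofLp_toEuclideanLin_apply, WithLp.ofLp_smul]
  exact h

lemma apply_eq_sum (A : Matrix (Fin n) (Fin n) ℝ)
    (b : OrthonormalBasis (Fin n) ℝ (EuclideanSpace ℝ (Fin n))) (μ : Fin n → ℝ)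
    (hb : ∀ j, Matrix.toEuclideanLin A (b j) = μ j • b j) (x : EuclideanSpace ℝ (Fin n)) :
    Matrix.toEuclideanLin A x = ∑ j, ((inner ℝ (b j) x : ℝ) * μ j) • b j := by
  conv_lhs => rw [← b.sum_repr' x]
  rw [map_sum]
  refine Finset.sum_congr rfl fun j _ => ?_
  rw [_root_.map_smul, hb j, smul_smul, mul_comm]

lemma q_eq_sum (A : Matrix (Fin n) (Fin n) ℝ)
    (b : OrthonormalBasis (Fin n) ℝ (EuclideanSpace ℝ (Fin n))) (μ : Fin n → ℝ)
    (hb : ∀ j, Matrix.toEuclideanLin A (b j) = μ j • b j) (x : EuclideanSpace ℝ (Fin n)) :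
    q A x = ∑ j, μ j * (inner ℝ (b j) x : ℝ) ^ 2 := by
  rw [q, apply_eq_sum A b μ hb x, inner_sum]
  refine Finset.sum_congr rfl fun j _ => ?_
  rw [real_inner_smul_right, real_inner_comm]
  ring


lemma sortedEig_nonneg {N : Matrix (Fin n) (Fin n) ℝ} (hN : N.PosSemidef) (j : Fin n) :
    0 ≤ sortedEig N hN.1 j :=
  hN.eigenvalues_nonneg _

lemma q_nonneg {N : Matrix (Fin n) (Fin n) ℝ} (hN : N.PosSemidef)
    (x : EuclideanSpace ℝ (Fin n)) : 0 ≤ q N x := by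
  obtain ⟨b, hb⟩ := exists_sorted_basis N hN.1
  rw [q_eq_sum N b _ hb]
  exact Finset.sum_nonneg fun j _ => mul_nonneg (sortedEig_nonneg hN j) (sq_nonneg _)

lemma q_basis (A : Matrix (Fin n) (Fin n) ℝ)
    (b : OrthonormalBasis (Fin n) ℝ (EuclideanSpace ℝ (Fin n))) (μ : Fin n → ℝ)
    (hb : ∀ j, Matrix.toEuclideanLin A (b j) = μ j • b j) (j : Fin n) :
    q A (b j) = μ j := by
  rw [q, hb j, real_inner_smul_right, real_inner_self_eq_norm_sq, b.orthonormal.1 j]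
  ring

lemma card_filter_ge (k : ℕ) (hk : k ≤ n) :
    (Finset.univ.filter (fun j : Fin n => n - k ≤ (j : ℕ))).card = k := by
  rcases Nat.eq_zero_or_pos k with rfl | hk1
  · rw [Finset.filter_false_of_mem, Finset.card_empty]
    intro j _
    simp only [Nat.sub_zero]
    omega
  · have hc : n - k < n := by omega
    have h1 : Finset.univ.filter (fun j : Fin n => (j : ℕ) < n - k)
        = Finset.Iio (⟨n - k, hc⟩ : Fin n) := by
      ext j
      simp [Fin.lt_def]
    have h2 : Finset.univ.filter (fun j : Fin n => n - k ≤ (j : ℕ))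
        = (Finset.univ.filter (fun j : Fin n => (j : ℕ) < n - k))ᶜ := by
      ext j
      simp [Finset.mem_compl, Nat.not_lt]
    rw [h2, Finset.card_compl, h1, Fin.card_Iio]
    simp only [Fintype.card_fin]
    omega

lemma sum_mul_le_topSum (μ t : Fin n → ℝ) (hμ : Monotone μ) (k : ℕ) (hk : k ≤ n)
    (ht0 : ∀ j, 0 ≤ t j) (ht1 : ∀ j, t j ≤ 1) (hts : ∑ j, t j = k) :
    ∑ j, μ j * t j ≤ ∑ j ∈ Finset.univ.filter (fun j : Fin n => n - k ≤ (j : ℕ)), μ j := by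
  rcases Nat.eq_zero_or_pos k with rfl | hk1
  · have h0 : ∀ j ∈ Finset.univ, t j = 0 := by
      intro j _
      have := (Finset.sum_eq_zero_iff_of_nonneg (fun j _ => ht0 j)).mp (by simpa using hts)
      exact this j (Finset.mem_univ j)
    have : ∑ j, μ j * t j = 0 := Finset.sum_eq_zero fun j hj => by rw [h0 j hj, mul_zero]
    rw [this]
    rw [Finset.filter_false_of_mem (by intro j _; simp only [Nat.sub_zero]; omega)]
    simp
  · have hn0 : 0 < n := lt_of_lt_of_le hk1 hk
    set c : Fin n := ⟨n - k, by omega⟩ with hc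
    set F := Finset.univ.filter (fun j : Fin n => n - k ≤ (j : ℕ)) with hF
    set F' := Finset.univ.filter (fun j : Fin n => ¬ n - k ≤ (j : ℕ)) with hF'
    have hsplit : ∑ j ∈ F, t j + ∑ j ∈ F', t j = (k : ℝ) := by
      rw [hF, hF', Finset.sum_filter_add_sum_filter_not, hts]
    have hsplit2 : ∑ j, μ j * t j = ∑ j ∈ F, μ j * t j + ∑ j ∈ F', μ j * t j :=
      (Finset.sum_filter_add_sum_filter_not _ _ _).symm
    have hcard : (F.card : ℝ) = k := by exact_mod_cast card_filter_ge k hk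
    have h1 : ∑ j ∈ F, μ c * (1 - t j) ≤ ∑ j ∈ F, μ j * (1 - t j) := by
      refine Finset.sum_le_sum fun j hj => ?_
      have hcj : c ≤ j := by
        rw [Fin.le_def]
        exact (Finset.mem_filter.mp hj).2
      exact mul_le_mul_of_nonneg_right (hμ hcj) (by linarith [ht1 j])
    have h2 : ∑ j ∈ F', μ j * t j ≤ ∑ j ∈ F', μ c * t j := by
      refine Finset.sum_le_sum fun j hj => ?_
      have hjc : j ≤ c := by
        rw [Fin.le_def]
        have := (Finset.mem_filter.mp hj).2
        simp only [hc]
        omega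
      exact mul_le_mul_of_nonneg_right (hμ hjc) (ht0 j)
    have e1 : ∑ j ∈ F, μ c * (1 - t j) = μ c * ((F.card : ℝ) - ∑ j ∈ F, t j) := by
      have h' : ∑ j ∈ F, μ c * (1 - t j) = ∑ j ∈ F, (μ c - μ c * t j) :=
        Finset.sum_congr rfl fun j _ => by ring
      rw [h', Finset.sum_sub_distrib, Finset.sum_const, nsmul_eq_mul, mul_sub, Finset.mul_sum]
      ring
    have e2 : ∑ j ∈ F', μ c * t j = μ c * ∑ j ∈ F', t j := by
      rw [Finset.mul_sum]
    have e3 : ∑ j ∈ F, μ j * (1 - t j) = ∑ j ∈ F, μ j - ∑ j ∈ F, μ j * t j := by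
      rw [← Finset.sum_sub_distrib]
      exact Finset.sum_congr rfl fun j _ => by ring
    have hXY : (F.card : ℝ) - ∑ j ∈ F, t j = ∑ j ∈ F', t j := by linarith
    have e4 : μ c * ((F.card : ℝ) - ∑ j ∈ F, t j) = μ c * ∑ j ∈ F', t j := by rw [hXY]
    linarith [h1, h2, e1, e2, e3, e4, hsplit2]


lemma sortedEig_monotone (A : Matrix (Fin n) (Fin n) ℝ) (hA : A.IsHermitian) :
    Monotone (sortedEig A hA) :=
  Tuple.monotone_sort hA.eigenvalues

lemma sum_q_le (A : Matrix (Fin n) (Fin n) ℝ) (hA : A.IsHermitian) (k : ℕ) (hk : k ≤ n)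
    (u : Fin k → EuclideanSpace ℝ (Fin n)) (hu : Orthonormal ℝ u) :
    ∑ i, q A (u i) ≤
      ∑ j ∈ Finset.univ.filter (fun j : Fin n => n - k ≤ (j : ℕ)), sortedEig A hA j := by
  obtain ⟨b, hb⟩ := exists_sorted_basis A hA
  set μ := sortedEig A hA with hμdef
  set t : Fin n → ℝ := fun j => ∑ i, (inner ℝ (b j) (u i) : ℝ) ^ 2 with ht
  have h1 : ∑ i, q A (u i) = ∑ j, μ j * t j := by
    simp_rw [q_eq_sum A b μ hb]
    rw [Finset.sum_comm]
    simp_rw [ht, Finset.mul_sum]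
  have ht0 : ∀ j, 0 ≤ t j := fun j => Finset.sum_nonneg fun i _ => sq_nonneg _
  have ht1 : ∀ j, t j ≤ 1 := by
    intro j
    have hB := hu.sum_inner_products_le (b j) (s := Finset.univ)
    have hb1 : ‖b j‖ = 1 := b.orthonormal.1 j
    calc t j = ∑ i, ‖(inner ℝ (u i) (b j) : ℝ)‖ ^ 2 := by
          refine Finset.sum_congr rfl fun i _ => ?_
          rw [Real.norm_eq_abs, sq_abs, real_inner_comm]
      _ ≤ ‖b j‖ ^ 2 := hB
      _ = 1 := by rw [hb1]; norm_num
  have hts : ∑ j, t j = (k : ℝ) := by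
    rw [ht]
    rw [Finset.sum_comm]
    have he : ∀ i, ∑ j, (inner ℝ (b j) (u i) : ℝ) ^ 2 = 1 := by
      intro i
      have hp := b.sum_inner_mul_inner (u i) (u i)
      have hui : (inner ℝ (u i) (u i) : ℝ) = 1 := by
        rw [real_inner_self_eq_norm_sq, hu.1 i]; norm_num
      rw [hui] at hp
      rw [← hp]
      refine Finset.sum_congr rfl fun j _ => ?_
      rw [real_inner_comm (u i) (b j)]
      ring
    calc ∑ i : Fin k, ∑ j, (inner ℝ (b j) (u i) : ℝ) ^ 2 = ∑ _i : Fin k, (1 : ℝ) :=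
          Finset.sum_congr rfl fun i _ => he i
      _ = (k : ℝ) := by simp
  rw [h1]
  exact sum_mul_le_topSum μ t (sortedEig_monotone A hA) k hk ht0 ht1 hts

lemma exists_topSum_family (A : Matrix (Fin n) (Fin n) ℝ) (hA : A.IsHermitian) (k : ℕ)
    (hk : k ≤ n) :
    ∃ u : Fin k → EuclideanSpace ℝ (Fin n), Orthonormal ℝ u ∧
      ∑ i, q A (u i) =
        ∑ j ∈ Finset.univ.filter (fun j : Fin n => n - k ≤ (j : ℕ)), sortedEig A hA j := by
  obtain ⟨b, hb⟩ := exists_sorted_basis A hA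
  set emb : Fin k → Fin n := fun i => ⟨n - k + (i : ℕ), by omega⟩ with hemb
  have hinj : Function.Injective emb := by
    intro i i' h
    rw [hemb] at h
    simp only [Fin.mk.injEq] at h
    exact Fin.ext (by omega)
  refine ⟨fun i => b (emb i), b.orthonormal.comp emb hinj, ?_⟩
  have hq : ∀ i : Fin k, q A (b (emb i)) = sortedEig A hA (emb i) :=
    fun i => q_basis A b _ hb (emb i)
  simp_rw [hq]
  have himg : Finset.univ.filter (fun j : Fin n => n - k ≤ (j : ℕ))
      = Finset.image emb Finset.univ := by
    ext j
    simp only [Finset.mem_filter, Finset.mem_univ, true_and, Finset.mem_image, hemb]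
    constructor
    · intro hj
      refine ⟨⟨(j : ℕ) - (n - k), by omega⟩, ?_⟩
      exact Fin.ext (by simp; omega)
    · rintro ⟨i, rfl⟩
      simp
  rw [himg, Finset.sum_image (fun i _ i' _ h => hinj h)]

lemma topSum_mono (W N : Matrix (Fin n) (Fin n) ℝ) (hW : W.IsHermitian) (hN : N.PosSemidef)
    (k : ℕ) (hk : k ≤ n) :
    ∑ j ∈ Finset.univ.filter (fun j : Fin n => n - k ≤ (j : ℕ)), sortedEig W hW j ≤
      ∑ j ∈ Finset.univ.filter (fun j : Fin n => n - k ≤ (j : ℕ)),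
        sortedEig (W + N) (hW.add hN.1) j := by
  obtain ⟨u, hu, he⟩ := exists_topSum_family W hW k hk
  rw [← he]
  calc ∑ i, q W (u i) ≤ ∑ i, q (W + N) (u i) := by
        refine Finset.sum_le_sum fun i _ => ?_
        rw [q_add]
        linarith [q_nonneg hN (u i)]
    _ ≤ _ := sum_q_le (W + N) (hW.add hN.1) k hk u hu

lemma sum_sortedEig (A : Matrix (Fin n) (Fin n) ℝ) (hA : A.IsHermitian) :
    ∑ j, sortedEig A hA j = A.trace := by
  have h1 : ∑ j, sortedEig A hA j = ∑ j, hA.eigenvalues j :=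
    Equiv.sum_comp (Tuple.sort hA.eigenvalues) hA.eigenvalues
  rw [h1]
  have h2 := congrArg Matrix.trace hA.spectral_theorem
  rw [Unitary.conjStarAlgAut_apply, Matrix.trace_mul_comm, ← Matrix.mul_assoc,
    Unitary.coe_star_mul_self, Matrix.one_mul, Matrix.trace_diagonal] at h2
  rw [h2]
  simp [RCLike.ofReal_real_eq_id]

lemma topSum_le_add_trace (W N : Matrix (Fin n) (Fin n) ℝ) (hW : W.IsHermitian)
    (hN : N.PosSemidef) (k : ℕ) (hk : k ≤ n) :
    ∑ j ∈ Finset.univ.filter (fun j : Fin n => n - k ≤ (j : ℕ)),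
        sortedEig (W + N) (hW.add hN.1) j ≤
      (∑ j ∈ Finset.univ.filter (fun j : Fin n => n - k ≤ (j : ℕ)), sortedEig W hW j)
        + N.trace := by
  obtain ⟨u, hu, he⟩ := exists_topSum_family (W + N) (hW.add hN.1) k hk
  rw [← he]
  have h1 : ∑ i, q (W + N) (u i) = ∑ i, q W (u i) + ∑ i, q N (u i) := by
    rw [← Finset.sum_add_distrib]
    exact Finset.sum_congr rfl fun i _ => q_add W N (u i)
  have h2 : ∑ i, q W (u i) ≤
      ∑ j ∈ Finset.univ.filter (fun j : Fin n => n - k ≤ (j : ℕ)), sortedEig W hW j :=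
    sum_q_le W hW k hk u hu
  have h3 : ∑ i, q N (u i) ≤ N.trace := by
    calc ∑ i, q N (u i) ≤
        ∑ j ∈ Finset.univ.filter (fun j : Fin n => n - k ≤ (j : ℕ)), sortedEig N hN.1 j :=
          sum_q_le N hN.1 k hk u hu
      _ ≤ ∑ j, sortedEig N hN.1 j := by
          refine Finset.sum_le_sum_of_subset_of_nonneg (Finset.filter_subset _ _)
            fun j _ _ => sortedEig_nonneg hN j
      _ = N.trace := sum_sortedEig N hN.1
  linarith


lemma opNorm_le_trace (N : Matrix (Fin n) (Fin n) ℝ) (hN : N.PosSemidef) :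
    opNorm N ≤ N.trace := by
  obtain ⟨b, hb⟩ := exists_sorted_basis N hN.1
  have htr : ∑ j, sortedEig N hN.1 j = N.trace := sum_sortedEig N hN.1
  have htr0 : 0 ≤ N.trace := by
    rw [← htr]
    exact Finset.sum_nonneg fun j _ => sortedEig_nonneg hN j
  rw [opNorm]
  refine ContinuousLinearMap.opNorm_le_bound _ htr0 fun x => ?_
  have hx : Matrix.toEuclideanLin N x
      = ∑ j, ((inner ℝ (b j) x : ℝ) * sortedEig N hN.1 j) • b j :=
    apply_eq_sum N b _ hb x
  calc ‖LinearMap.toContinuousLinearMap (Matrix.toEuclideanLin N) x‖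
      = ‖∑ j, ((inner ℝ (b j) x : ℝ) * sortedEig N hN.1 j) • b j‖ := by
        rw [LinearMap.coe_toContinuousLinearMap', hx]
    _ ≤ ∑ j, ‖((inner ℝ (b j) x : ℝ) * sortedEig N hN.1 j) • b j‖ := norm_sum_le _ _
    _ ≤ ∑ j, sortedEig N hN.1 j * ‖x‖ := by
        refine Finset.sum_le_sum fun j _ => ?_
        rw [norm_smul, b.orthonormal.1 j, mul_one]
        have h1 : |(inner ℝ (b j) x : ℝ)| ≤ ‖x‖ := by
          calc |(inner ℝ (b j) x : ℝ)| ≤ ‖b j‖ * ‖x‖ := abs_real_inner_le_norm _ _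
            _ = ‖x‖ := by rw [b.orthonormal.1 j, one_mul]
        rw [Real.norm_eq_abs, abs_mul, abs_of_nonneg (sortedEig_nonneg hN j)]
        calc |(inner ℝ (b j) x : ℝ)| * sortedEig N hN.1 j ≤ ‖x‖ * sortedEig N hN.1 j :=
              mul_le_mul_of_nonneg_right h1 (sortedEig_nonneg hN j)
          _ = sortedEig N hN.1 j * ‖x‖ := mul_comm _ _
    _ = N.trace * ‖x‖ := by rw [← Finset.sum_mul, htr]

end GpAux

/-- **Uniform ellipticity of `G_p`**: for symmetric `W` and positive semidefinite `N`,
`min(p, n−p)·‖N‖ ≤ G_p(W+N) − G_p(W) ≤ max(p, n−p)·tr N`, with `‖N‖` the operator norm. -/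
theorem Gp_uniformly_elliptic (n p : ℕ) (hn : 2 ≤ n) (hp1 : 1 ≤ p) (hp2 : p ≤ n - 1)
    (W N : Matrix (Fin n) (Fin n) ℝ) (hW : W.IsHermitian) (hN : N.PosSemidef) :
    (min (p : ℝ) ((n : ℝ) - p)) * opNorm N ≤ Gp p (W + N) - Gp p W ∧
    Gp p (W + N) - Gp p W ≤ (max (p : ℝ) ((n : ℝ) - p)) * N.trace := by
  classical
  have hNh : N.IsHermitian := hN.1
  have hWN : (W + N).IsHermitian := hW.add hNh
  have hpn : p < n := by omega
  set k := n - p with hkdef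
  have hk1 : 1 ≤ k := by omega
  have hkn : k ≤ n := by omega
  have hnk : n - k = p := by omega
  have gp_eq : ∀ (M : Matrix (Fin n) (Fin n) ℝ) (hM : M.IsHermitian), Gp p M
      = ((n : ℝ) - p) * (∑ j ∈ Finset.univ.filter (fun j : Fin n => ¬ n - k ≤ (j : ℕ)),
            sortedEig M hM j)
        + (p : ℝ) * (∑ j ∈ Finset.univ.filter (fun j : Fin n => n - k ≤ (j : ℕ)),
            sortedEig M hM j) := by
    intro M hM
    rw [Gp, dif_pos hM,
      ← Finset.sum_filter_add_sum_filter_not Finset.univ (fun i : Fin n => n - k ≤ (i : ℕ))]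
    have hA : ∑ j ∈ Finset.univ.filter (fun j : Fin n => n - k ≤ (j : ℕ)),
        (if (j : ℕ) < p then ((n : ℝ) - p) else (p : ℝ)) * sortedEig M hM j
        = (p : ℝ) * ∑ j ∈ Finset.univ.filter (fun j : Fin n => n - k ≤ (j : ℕ)),
            sortedEig M hM j := by
      rw [Finset.mul_sum]
      refine Finset.sum_congr rfl fun j hj => ?_
      have hj' := (Finset.mem_filter.mp hj).2
      rw [if_neg (by omega)]
    have hB : ∑ j ∈ Finset.univ.filter (fun j : Fin n => ¬ n - k ≤ (j : ℕ)),
        (if (j : ℕ) < p then ((n : ℝ) - p) else (p : ℝ)) * sortedEig M hM j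
        = ((n : ℝ) - p) * ∑ j ∈ Finset.univ.filter (fun j : Fin n => ¬ n - k ≤ (j : ℕ)),
            sortedEig M hM j := by
      rw [Finset.mul_sum]
      refine Finset.sum_congr rfl fun j hj => ?_
      have hj' := (Finset.mem_filter.mp hj).2
      rw [if_pos (by omega)]
    rw [hA, hB]
    ring
  set Tw := ∑ j ∈ Finset.univ.filter (fun j : Fin n => n - k ≤ (j : ℕ)), sortedEig W hW j
    with hTw
  set Twn := ∑ j ∈ Finset.univ.filter (fun j : Fin n => n - k ≤ (j : ℕ)), sortedEig (W + N) hWN j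
    with hTwn
  set Lw := ∑ j ∈ Finset.univ.filter (fun j : Fin n => ¬ n - k ≤ (j : ℕ)), sortedEig W hW j
    with hLw
  set Lwn := ∑ j ∈ Finset.univ.filter (fun j : Fin n => ¬ n - k ≤ (j : ℕ)),
      sortedEig (W + N) hWN j with hLwn
  have hT1 : Tw ≤ Twn := GpAux.topSum_mono W N hW hN k hkn
  have hT2 : Twn ≤ Tw + N.trace := GpAux.topSum_le_add_trace W N hW hN k hkn
  have hsW : Tw + Lw = W.trace := by
    rw [hTw, hLw, Finset.sum_filter_add_sum_filter_not]
    exact GpAux.sum_sortedEig W hW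
  have hsWN : Twn + Lwn = W.trace + N.trace := by
    rw [hTwn, hLwn, Finset.sum_filter_add_sum_filter_not, GpAux.sum_sortedEig (W + N) hWN,
      Matrix.trace_add]
  have hdh0 : 0 ≤ Twn - Tw := by linarith
  have hdl0 : 0 ≤ Lwn - Lw := by linarith
  have hdsum : (Lwn - Lw) + (Twn - Tw) = N.trace := by linarith
  have hop : opNorm N ≤ N.trace := GpAux.opNorm_le_trace N hN
  have hop0 : 0 ≤ opNorm N := norm_nonneg _
  have hGdiff : Gp p (W + N) - Gp p W = ((n : ℝ) - p) * (Lwn - Lw) + (p : ℝ) * (Twn - Tw) := by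
    rw [gp_eq (W + N) hWN, gp_eq W hW]
    ring
  have hpR : (1 : ℝ) ≤ (p : ℝ) := by exact_mod_cast hp1
  have hnpR : (1 : ℝ) ≤ (n : ℝ) - p := by
    have : (p : ℝ) + 1 ≤ (n : ℝ) := by exact_mod_cast hpn
    linarith
  constructor
  · set m := min (p : ℝ) ((n : ℝ) - p) with hm
    have hm1 : m ≤ (p : ℝ) := min_le_left _ _
    have hm2 : m ≤ (n : ℝ) - p := min_le_right _ _
    have hm0 : 0 ≤ m := le_min (by linarith) (by linarith)
    have e : m * N.trace = m * (Lwn - Lw) + m * (Twn - Tw) := by rw [← hdsum]; ring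
    rw [hGdiff]
    have p1 := mul_le_mul_of_nonneg_left hop hm0
    have p2 := mul_le_mul_of_nonneg_right hm2 hdl0
    have p3 := mul_le_mul_of_nonneg_right hm1 hdh0
    linarith
  · set M := max (p : ℝ) ((n : ℝ) - p) with hM
    have hM1 : (p : ℝ) ≤ M := le_max_left _ _
    have hM2 : (n : ℝ) - p ≤ M := le_max_right _ _
    have e : M * N.trace = M * (Lwn - Lw) + M * (Twn - Tw) := by rw [← hdsum]; ring
    rw [hGdiff]
    have p2 := mul_le_mul_of_nonneg_right hM2 hdl0
    have p3 := mul_le_mul_of_nonneg_right hM1 hdh0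
    linarith


end
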